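/- If q is a positive integer not divisible by 8, then for every ε > 0, the number λ(q) of pairs (x, y) with 1 ≤ x, y ≤ q and x² + y² + 1 ≡ 0 (mod q) satisfies λ(q) ≪_ε q^{1+ε}. -/

import Mathlib

open Finset

/-- λ(q) = number of pairs 1 ≤ x, y ≤ q with x² + y² + 1 ≡ 0 (mod q). -/
def lamCount (q : ℕ) : ℕ :=
  ((Finset.Icc 1 q ×ˢ Finset.Icc 1 q).filter
    (fun p : ℕ × ℕ => (q : ℤ) ∣ ((p.1 : ℤ)^2 + (p.2 : ℤ)^2 + 1))).card

lemma tau_bound (ε : ℝ) (hε : 0 < ε) : ∃ C : ℝ, 1 ≤ C ∧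
    ∀ n : ℕ, 0 < n → (n.divisors.card : ℝ) ≤ C * (n : ℝ) ^ ε := by
  have hlog2 : (0:ℝ) < Real.log 2 := Real.log_pos (by norm_num)
  set δ : ℝ := ε * Real.log 2 with hδdef
  have hδ : 0 < δ := mul_pos hε hlog2
  set C₀ : ℝ := 2 / δ + 2 with hC₀def
  have hδdiv : (0:ℝ) < 2 / δ := by positivity
  have hC₀ : 1 ≤ C₀ := by rw [hC₀def]; linarith
  -- step: k+1 ≤ C₀ exp(δ k)
  have hstep : ∀ k : ℕ, (k + 1 : ℝ) ≤ C₀ * Real.exp (δ * k) := by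
    intro k
    rcases le_or_gt (δ * k) 1 with h | h
    · have hk : (k : ℝ) ≤ 1 / δ := by
        rw [le_div_iff₀ hδ]; linarith [mul_comm δ (k:ℝ)]
      have hexp : (1:ℝ) ≤ Real.exp (δ * k) := by
        apply Real.one_le_exp; positivity
      have hdd : 1 / δ ≤ 2 / δ := by gcongr <;> norm_num
      have h1 : (k + 1 : ℝ) ≤ C₀ := by rw [hC₀def]; linarith
      calc (k+1:ℝ) ≤ C₀ := h1
        _ = C₀ * 1 := (mul_one _).symm
        _ ≤ C₀ * Real.exp (δ * k) := by
            apply mul_le_mul_of_nonneg_left hexp (by linarith)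
    · have hk1 : (1:ℝ) ≤ k := by
        rcases Nat.eq_zero_or_pos k with rfl | hk
        · simp at h; linarith
        · exact_mod_cast hk
      have hexp : δ * k ≤ Real.exp (δ * k) := by
        linarith [Real.add_one_le_exp (δ * k)]
      have hmm : (2 / δ) * (δ * k) ≤ C₀ * Real.exp (δ * k) := by
        apply mul_le_mul (by rw [hC₀def]; linarith) hexp (by positivity) (by linarith)
      have h2 : (2/δ) * (δ * k) = 2 * k := by field_simp
      rw [h2] at hmm
      linarith
  -- per-prime bound
  set B : ℕ := ⌈(2:ℝ) ^ (1/ε)⌉₊ with hBdef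
  have hprime : ∀ p k : ℕ, 2 ≤ p →
      (k + 1 : ℝ) ≤ (if p ≤ B then C₀ else 1) * ((p:ℝ) ^ k) ^ ε := by
    intro p k hp
    have hp0 : (0:ℝ) < p := by positivity
    have hpk0 : (0:ℝ) < (p:ℝ) ^ k := by positivity
    split_ifs with hB
    · -- small prime: (p^k)^ε ≥ exp(δ k)
      have h1 : Real.exp (δ * k) ≤ ((p:ℝ) ^ k) ^ ε := by
        rw [← Real.exp_log (x := ((p:ℝ)^k)^ε) (by positivity),
            Real.log_rpow hpk0, Real.log_pow]
        apply Real.exp_le_exp.mpr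
        have h2p : Real.log 2 ≤ Real.log p := by
          apply Real.log_le_log (by norm_num) (by exact_mod_cast hp)
        have : δ * k = ε * (k * Real.log 2) := by rw [hδdef]; ring
        rw [this]
        have : ε * ((k:ℕ) * Real.log ↑p) = ε * (k * Real.log p) := by push_cast; ring
        rw [this]
        apply mul_le_mul_of_nonneg_left ?_ hε.le
        apply mul_le_mul_of_nonneg_left h2p (by positivity)
      calc (k+1:ℝ) ≤ C₀ * Real.exp (δ * k) := hstep k
        _ ≤ C₀ * ((p:ℝ)^k)^ε := by
            apply mul_le_mul_of_nonneg_left h1 (by linarith)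
    · -- large prime: p^ε ≥ 2
      push_neg at hB
      have hple : (2:ℝ) ^ (1/ε) ≤ p := by
        have := Nat.ceil_le.mp (Nat.le_of_lt_succ (Nat.lt_succ_of_lt hB))
        calc (2:ℝ)^(1/ε) ≤ (B:ℝ) := Nat.le_ceil _
          _ ≤ p := by exact_mod_cast hB.le
      have h2 : (2:ℝ) ≤ (p:ℝ) ^ ε := by
        have := Real.rpow_le_rpow (by positivity) hple hε.le
        rwa [← Real.rpow_mul (by norm_num), one_div,
          inv_mul_cancel₀ hε.ne', Real.rpow_one] at this

      have : ((p:ℝ)^k)^ε = ((p:ℝ)^ε)^k := by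
        rw [← Real.rpow_natCast (p:ℝ) k, ← Real.rpow_mul hp0.le,
          mul_comm, Real.rpow_mul hp0.le, Real.rpow_natCast]
      rw [this, one_mul]
      calc (k+1:ℝ) ≤ (2:ℝ)^k := by
            exact_mod_cast Nat.succ_le_of_lt (Nat.lt_two_pow_self (n := k))
        _ ≤ ((p:ℝ)^ε)^k := by
            apply pow_le_pow_left₀ (by norm_num) h2
  -- assemble
  refine ⟨C₀ ^ (B + 1), one_le_pow₀ hC₀, ?_⟩
  intro n hn
  have hn0 : n ≠ 0 := hn.ne'
  rw [Nat.card_divisors hn0]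
  push_cast
  have hnprod : (n : ℝ) = ∏ p ∈ n.primeFactors, ((p:ℝ) ^ (n.factorization p)) := by
    have h1 : n.factorization.prod (fun p k => p ^ k) =
        ∏ p ∈ n.primeFactors, p ^ n.factorization p := by
      rw [Finsupp.prod, Nat.support_factorization]
    conv_lhs => rw [← Nat.factorization_prod_pow_eq_self hn0]
    rw [h1]
    push_cast
    rfl
  have hrpow : (n : ℝ) ^ ε = ∏ p ∈ n.primeFactors, ((p:ℝ) ^ (n.factorization p)) ^ ε := by
    rw [hnprod, ← Real.finset_prod_rpow _ _ (fun i _ => by positivity) ε]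
  have hmain : (∏ p ∈ n.primeFactors, ((n.factorization p : ℝ) + 1)) ≤
      (∏ p ∈ n.primeFactors, (if p ≤ B then C₀ else 1)) *
      (∏ p ∈ n.primeFactors, ((p:ℝ) ^ (n.factorization p)) ^ ε) := by
    rw [← Finset.prod_mul_distrib]
    apply Finset.prod_le_prod
    · intro p _; positivity
    · intro p hp
      exact hprime p (n.factorization p) (Nat.prime_of_mem_primeFactors hp).two_le
  have hconst : (∏ p ∈ n.primeFactors, (if p ≤ B then C₀ else 1)) ≤ C₀ ^ (B + 1) := by
    rw [Finset.prod_ite, Finset.prod_const, Finset.prod_const, one_pow, mul_one]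
    apply pow_le_pow_right₀ hC₀
    calc (n.primeFactors.filter (fun p => p ≤ B)).card
        ≤ (Finset.range (B+1)).card := by
          apply Finset.card_le_card
          intro p hp
          simp only [Finset.mem_filter] at hp
          exact Finset.mem_range.mpr (Nat.lt_succ_of_le hp.2)
      _ = B + 1 := Finset.card_range _
  calc (∏ p ∈ n.primeFactors, ((n.factorization p : ℝ) + 1))
      ≤ (∏ p ∈ n.primeFactors, (if p ≤ B then C₀ else 1)) *
        (∏ p ∈ n.primeFactors, ((p:ℝ) ^ (n.factorization p)) ^ ε) := hmain
    _ ≤ C₀ ^ (B+1) * (∏ p ∈ n.primeFactors, ((p:ℝ) ^ (n.factorization p)) ^ ε) := by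
        apply mul_le_mul_of_nonneg_right hconst
        apply Finset.prod_nonneg; intro p _; positivity
    _ = C₀ ^ (B+1) * (n:ℝ) ^ ε := by rw [hrpow]

-- annihilator bound
lemma ann_card_le (q : ℕ) [NeZero q] (u : ZMod q) :
    (univ.filter fun w : ZMod q => u * w = 0).card ≤ Nat.gcd u.val q := by
  have hq : 0 < q := Nat.pos_of_ne_zero (NeZero.ne q)
  set d : ℕ := Nat.gcd u.val q with hd
  have hd0 : 0 < d := Nat.gcd_pos_of_pos_right _ hq
  have hdq : d ∣ q := Nat.gcd_dvd_right _ _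
  have hdu : d ∣ u.val := Nat.gcd_dvd_left _ _
  have hqd0 : 0 < q / d := Nat.div_pos (Nat.le_of_dvd hq hdq) hd0
  have hkey : ∀ w : ZMod q, u * w = 0 → (q / d) ∣ w.val := by
    intro w hw
    have h1 : ((u.val * w.val : ℕ) : ZMod q) = 0 := by
      push_cast [ZMod.natCast_zmod_val]
      exact hw
    have h2 : q ∣ u.val * w.val := (ZMod.natCast_eq_zero_iff _ _).mp h1
    have h3 : d * (q / d) ∣ d * ((u.val / d) * w.val) := by
      rw [Nat.mul_div_cancel' hdq, ← mul_assoc, Nat.mul_div_cancel' hdu]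
      exact h2
    have h4 : (q / d) ∣ (u.val / d) * w.val :=
      (mul_dvd_mul_iff_left hd0.ne').mp h3
    have h5 : Nat.Coprime (q / d) (u.val / d) :=
      (Nat.coprime_div_gcd_div_gcd hd0).symm
    exact h5.dvd_of_dvd_mul_left h4
  have : (univ.filter fun w : ZMod q => u * w = 0).card ≤ (Finset.range d).card := by
    apply Finset.card_le_card_of_injOn (fun w => w.val / (q / d))
    · intro w hw
      simp only [Finset.mem_coe, Finset.mem_filter, Finset.mem_univ, true_and] at hw ⊢
      rw [Finset.mem_range]
      rw [Nat.div_lt_iff_lt_mul hqd0]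
      calc w.val < q := ZMod.val_lt w
        _ = d * (q / d) := (Nat.mul_div_cancel' hdq).symm
    · intro w hw w' hw' hww
      simp only [Finset.mem_coe, Finset.mem_filter, Finset.mem_univ, true_and] at hw hw'
      have e1 : w.val = (q / d) * (w.val / (q / d)) := (Nat.mul_div_cancel' (hkey w hw)).symm
      have e2 : w'.val = (q / d) * (w'.val / (q / d)) := (Nat.mul_div_cancel' (hkey w' hw')).symm
      apply ZMod.val_injective
      rw [e1, e2]
      exact congrArg _ hww
  simpa using this

-- sum of gcd bound
lemma sum_gcd_le (q : ℕ) (hq : 0 < q) :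
    ∑ k ∈ Finset.range q, Nat.gcd k q ≤ q * q.divisors.card := by
  have hmaps : ∀ k ∈ Finset.range q, Nat.gcd k q ∈ q.divisors := by
    intro k _
    exact Nat.mem_divisors.mpr ⟨Nat.gcd_dvd_right _ _, hq.ne'⟩
  rw [← Finset.sum_fiberwise_of_maps_to hmaps]
  have hinner : ∀ d ∈ q.divisors,
      (∑ k ∈ (Finset.range q).filter (fun k => Nat.gcd k q = d), Nat.gcd k q) ≤ q := by
    intro d hd
    obtain ⟨hdq, _⟩ := Nat.mem_divisors.mp hd
    have hd0 : 0 < d := Nat.pos_of_dvd_of_pos hdq hq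
    have hqd0 : 0 < q / d := Nat.div_pos (Nat.le_of_dvd hq hdq) hd0
    have hcard : ((Finset.range q).filter (fun k => Nat.gcd k q = d)).card ≤ q / d := by
      have : ((Finset.range q).filter (fun k => Nat.gcd k q = d)).card
          ≤ (Finset.range (q / d)).card := by
        apply Finset.card_le_card_of_injOn (fun k => k / d)
        · intro k hk
          simp only [Finset.mem_coe, Finset.mem_filter, Finset.mem_range] at hk ⊢
          rw [Nat.div_lt_iff_lt_mul hd0]
          calc k < q := hk.1
            _ = q / d * d := (Nat.div_mul_cancel hdq).symm
        · intro k hk k' hk' hkk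
          simp only [Finset.mem_coe, Finset.mem_filter, Finset.mem_range] at hk hk'
          have e1 : d ∣ k := hk.2 ▸ Nat.gcd_dvd_left _ _
          have e2 : d ∣ k' := hk'.2 ▸ Nat.gcd_dvd_left _ _
          rw [← Nat.div_mul_cancel e1, ← Nat.div_mul_cancel e2]
          exact congrArg (· * d) hkk
        
      simpa using this
    calc (∑ k ∈ (Finset.range q).filter (fun k => Nat.gcd k q = d), Nat.gcd k q)
        = ∑ k ∈ (Finset.range q).filter (fun k => Nat.gcd k q = d), d := by
          apply Finset.sum_congr rfl
          intro k hk
          exact (Finset.mem_filter.mp hk).2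
      _ = ((Finset.range q).filter (fun k => Nat.gcd k q = d)).card * d := by
          rw [Finset.sum_const, smul_eq_mul]
      _ ≤ (q / d) * d := Nat.mul_le_mul_right _ hcard
      _ = q := Nat.div_mul_cancel hdq
  calc (∑ d ∈ q.divisors, ∑ k ∈ (Finset.range q).filter (fun k => Nat.gcd k q = d), Nat.gcd k q)
      ≤ ∑ d ∈ q.divisors, q := Finset.sum_le_sum hinner
    _ = q.divisors.card * q := by rw [Finset.sum_const, smul_eq_mul]
    _ = q * q.divisors.card := Nat.mul_comm _ _

lemma two_torsion_card (q : ℕ) [NeZero q] :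
    (univ.filter fun v : ZMod q => v + v = 0).card ≤ 2 := by
  have hq : 0 < q := Nat.pos_of_ne_zero (NeZero.ne q)
  have hsub : (univ.filter fun v : ZMod q => v + v = 0) ⊆
      {(0 : ZMod q), ((q / 2 : ℕ) : ZMod q)} := by
    intro v hv
    simp only [Finset.mem_filter, Finset.mem_univ, true_and] at hv
    have h1 : ((v.val + v.val : ℕ) : ZMod q) = 0 := by
      push_cast [ZMod.natCast_zmod_val]; exact hv
    have h2 : q ∣ v.val + v.val := (ZMod.natCast_eq_zero_iff _ _).mp h1
    have h3 : v.val < q := ZMod.val_lt v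
    obtain ⟨c, hc⟩ := h2
    have hc2 : c < 2 := by nlinarith
    have : v.val = 0 ∨ v.val = q / 2 := by
      interval_cases c <;> omega
    rcases this with h | h
    · have : v = 0 := by
        rw [← ZMod.natCast_zmod_val v, h]; simp
      simp [this]
    · have : v = ((q / 2 : ℕ) : ZMod q) := by
        rw [← ZMod.natCast_zmod_val v, h]
      simp [this]
  calc (univ.filter fun v : ZMod q => v + v = 0).card
      ≤ ({(0 : ZMod q), ((q / 2 : ℕ) : ZMod q)} : Finset (ZMod q)).card :=
        Finset.card_le_card hsub
    _ ≤ 2 := Finset.card_insert_le _ _ |>.trans (by simp)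

lemma U_card_le (q : ℕ) [NeZero q] :
    (univ.filter fun p : ZMod q × ZMod q => p.1 * p.2 = 0).card ≤ q * q.divisors.card := by
  have hq : 0 < q := Nat.pos_of_ne_zero (NeZero.ne q)
  set U := univ.filter fun p : ZMod q × ZMod q => p.1 * p.2 = 0 with hU
  have hfib : U.card = ∑ u : ZMod q, (U.filter fun p => p.1 = u).card :=
    Finset.card_eq_sum_card_fiberwise (fun p _ => Finset.mem_univ p.1)
  have hfib2 : ∀ u : ZMod q, (U.filter fun p => p.1 = u).card
      = (univ.filter fun w : ZMod q => u * w = 0).card := by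
    intro u
    have : (U.filter fun p => p.1 = u)
        = ({u} : Finset (ZMod q)) ×ˢ (univ.filter fun w : ZMod q => u * w = 0) := by
      ext ⟨a, b⟩
      simp only [hU, Finset.mem_filter, Finset.mem_univ, true_and, Finset.mem_product,
        Finset.mem_singleton]
      constructor
      · rintro ⟨h1, rfl⟩; exact ⟨rfl, h1⟩
      · rintro ⟨rfl, h2⟩; exact ⟨h2, rfl⟩
    rw [this, Finset.card_product, Finset.card_singleton, one_mul]
  have hsum : U.card ≤ ∑ u : ZMod q, Nat.gcd u.val q := by
    rw [hfib]
    apply Finset.sum_le_sum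
    intro u _
    rw [hfib2 u]
    exact ann_card_le q u
  have hreindex : ∑ u : ZMod q, Nat.gcd u.val q = ∑ k ∈ Finset.range q, Nat.gcd k q := by
    apply Finset.sum_bij' (i := fun (u : ZMod q) _ => u.val)
      (j := fun (k : ℕ) _ => (k : ZMod q))
    · intro u _; exact Finset.mem_range.mpr (ZMod.val_lt u)
    · intro k _; exact Finset.mem_univ _
    · intro u _; exact ZMod.natCast_zmod_val u
    · intro k hk; exact ZMod.val_cast_of_lt (Finset.mem_range.mp hk)
    · intro u _; rfl
  calc U.card ≤ ∑ u : ZMod q, Nat.gcd u.val q := hsum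
    _ = ∑ k ∈ Finset.range q, Nat.gcd k q := hreindex
    _ ≤ q * q.divisors.card := sum_gcd_le q hq

lemma nat_amgm (a b : ℕ) : 2 * (a * b) ≤ a * a + b * b := by
  rcases le_total a b with h | h
  · obtain ⟨c, rfl⟩ := Nat.le.dest h; nlinarith
  · obtain ⟨c, rfl⟩ := Nat.le.dest h; nlinarith

lemma D_card_le (q : ℕ) [NeZero q] :
    (univ.filter fun p : ZMod q × ZMod q => p.1^2 = p.2^2).card ≤
    4 * (univ.filter fun p : ZMod q × ZMod q => p.1 * p.2 = 0).card := by
  set U := univ.filter fun p : ZMod q × ZMod q => p.1 * p.2 = 0 with hU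
  set D := univ.filter fun p : ZMod q × ZMod q => p.1^2 = p.2^2 with hD
  set KF := univ.filter fun v : ZMod q => v + v = 0 with hKF
  have hmaps : ∀ p ∈ D, (p.1 - p.2, p.1 + p.2) ∈ U := by
    intro p hp
    simp only [hD, hU, Finset.mem_filter, Finset.mem_univ, true_and] at hp ⊢
    linear_combination hp
  apply Finset.card_le_mul_card_image_of_maps_to hmaps
  intro b _
  rcases Finset.eq_empty_or_nonempty
    (D.filter fun p => (p.1 - p.2, p.1 + p.2) = b) with he | ⟨p₀, hp₀⟩
  · rw [he]; simp
  · have key : (D.filter fun p => (p.1 - p.2, p.1 + p.2) = b).card ≤ (KF ×ˢ KF).card := by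
      apply Finset.card_le_card_of_injOn (fun p => (p.1 - p₀.1, p.2 - p₀.2))
      · intro p hp
        simp only [Finset.mem_coe, Finset.mem_filter] at hp hp₀
        have hcomp : (p.1 - p.2, p.1 + p.2) = (p₀.1 - p₀.2, p₀.1 + p₀.2) := by
          rw [hp.2, hp₀.2]
        have h1 : p.1 - p.2 = p₀.1 - p₀.2 := congrArg Prod.fst hcomp
        have h2 : p.1 + p.2 = p₀.1 + p₀.2 := congrArg Prod.snd hcomp
        simp only [hKF, Finset.mem_coe, Finset.mem_product, Finset.mem_filter, Finset.mem_univ, true_and]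
        constructor
        · linear_combination h1 + h2
        · linear_combination h2 - h1
      · intro p hp p' hp' hpp
        have h1 : p.1 - p₀.1 = p'.1 - p₀.1 := congrArg Prod.fst hpp
        have h2 : p.2 - p₀.2 = p'.2 - p₀.2 := congrArg Prod.snd hpp
        have e1 : p.1 = p'.1 := by linear_combination h1
        have e2 : p.2 = p'.2 := by linear_combination h2
        exact Prod.ext e1 e2
    calc (D.filter fun p => (p.1 - p.2, p.1 + p.2) = b).card
        ≤ (KF ×ˢ KF).card := key
      _ = KF.card * KF.card := Finset.card_product _ _
      _ ≤ 2 * 2 := Nat.mul_le_mul (two_torsion_card q) (two_torsion_card q)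
      _ = 4 := rfl

lemma S_card_le (q : ℕ) [NeZero q] :
    (univ.filter fun p : ZMod q × ZMod q => p.1^2 + p.2^2 + 1 = 0).card ≤
    (univ.filter fun p : ZMod q × ZMod q => p.1^2 = p.2^2).card := by
  set R : ZMod q → ℕ := fun a => (univ.filter fun x : ZMod q => x^2 = a).card with hR
  set S := univ.filter fun p : ZMod q × ZMod q => p.1^2 + p.2^2 + 1 = 0 with hS
  set D := univ.filter fun p : ZMod q × ZMod q => p.1^2 = p.2^2 with hD
  have hScard : S.card = ∑ a : ZMod q, R a * R (-1 - a) := by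
    rw [Finset.card_eq_sum_card_fiberwise (f := fun p => p.1^2) (t := univ)
      (fun p _ => Finset.mem_univ _)]
    apply Finset.sum_congr rfl
    intro a _
    have : (S.filter fun p => p.1^2 = a) =
        (univ.filter fun x : ZMod q => x^2 = a) ×ˢ
        (univ.filter fun y : ZMod q => y^2 = -1 - a) := by
      ext ⟨x, y⟩
      simp only [hS, Finset.mem_filter, Finset.mem_univ, true_and, Finset.mem_product]
      constructor
      · rintro ⟨h1, h2⟩; exact ⟨h2, by linear_combination h1 - h2⟩
      · rintro ⟨h1, h2⟩; exact ⟨by linear_combination h1 + h2, h1⟩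
    rw [this, Finset.card_product]
  have hDcard : D.card = ∑ a : ZMod q, R a * R a := by
    rw [Finset.card_eq_sum_card_fiberwise (f := fun p => p.1^2) (t := univ)
      (fun p _ => Finset.mem_univ _)]
    apply Finset.sum_congr rfl
    intro a _
    have : (D.filter fun p => p.1^2 = a) =
        (univ.filter fun x : ZMod q => x^2 = a) ×ˢ
        (univ.filter fun y : ZMod q => y^2 = a) := by
      ext ⟨x, y⟩
      simp only [hD, Finset.mem_filter, Finset.mem_univ, true_and, Finset.mem_product]
      constructor
      · rintro ⟨h1, h2⟩; exact ⟨h2, by rw [← h1, h2]⟩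
      · rintro ⟨h1, h2⟩; exact ⟨by rw [h1, h2], h1⟩
    rw [this, Finset.card_product]
  have hswap : ∑ a : ZMod q, R (-1 - a) * R (-1 - a) = ∑ a : ZMod q, R a * R a := by
    apply Finset.sum_bij' (i := fun (a : ZMod q) _ => -1 - a) (j := fun (a : ZMod q) _ => -1 - a)
    · intro a _; exact Finset.mem_univ _
    · intro a _; exact Finset.mem_univ _
    · intro a _; ring
    · intro a _; ring
    · intro a _; rfl
  have h2 : 2 * S.card ≤ 2 * D.card := by
    rw [hScard, hDcard, Finset.mul_sum, Finset.mul_sum]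
    calc ∑ a : ZMod q, 2 * (R a * R (-1 - a))
        ≤ ∑ a : ZMod q, (R a * R a + R (-1 - a) * R (-1 - a)) := by
          apply Finset.sum_le_sum
          intro a _
          exact nat_amgm _ _
      _ = ∑ a : ZMod q, R a * R a + ∑ a : ZMod q, R (-1 - a) * R (-1 - a) :=
          Finset.sum_add_distrib
      _ = ∑ a : ZMod q, R a * R a + ∑ a : ZMod q, R a * R a := by rw [hswap]
      _ = ∑ a : ZMod q, 2 * (R a * R a) := by
          rw [← Finset.sum_add_distrib]
          exact Finset.sum_congr rfl fun a _ => by ring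
  exact Nat.le_of_mul_le_mul_left h2 (by norm_num)


lemma lamCount_eq (q : ℕ) [NeZero q] :
    lamCount q = (univ.filter fun p : ZMod q × ZMod q => p.1^2 + p.2^2 + 1 = 0).card := by
  have hq : 0 < q := Nat.pos_of_ne_zero (NeZero.ne q)
  have hcond : ∀ x y : ℕ, ((q:ℤ) ∣ ((x:ℤ)^2 + (y:ℤ)^2 + 1)) ↔
      ((x : ZMod q)^2 + (y : ZMod q)^2 + 1 = 0) := by
    intro x y
    rw [← ZMod.intCast_zmod_eq_zero_iff_dvd]
    push_cast
    rfl
  set g : ZMod q → ℕ := fun a => if a = 0 then q else a.val with hg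
  have hgcast : ∀ a : ZMod q, ((g a : ℕ) : ZMod q) = a := by
    intro a
    rw [hg]
    dsimp only
    split_ifs with h
    · simp [h]
    · exact ZMod.natCast_zmod_val a
  have hgmem : ∀ a : ZMod q, g a ∈ Finset.Icc 1 q := by
    intro a
    rw [hg, Finset.mem_Icc]
    dsimp only
    split_ifs with h
    · exact ⟨hq, le_refl q⟩
    · exact ⟨Nat.pos_of_ne_zero (fun hh => h ((ZMod.val_eq_zero a).mp hh)),
        (ZMod.val_lt a).le⟩
  have hgicc : ∀ x : ℕ, x ∈ Finset.Icc 1 q → g ((x : ZMod q)) = x := by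
    intro x hx
    rw [Finset.mem_Icc] at hx
    rw [hg]
    dsimp only
    split_ifs with h
    · have : q ∣ x := (ZMod.natCast_eq_zero_iff _ _).mp h
      exact (Nat.le_antisymm (Nat.le_of_dvd (by omega) this) hx.2).symm ▸ rfl
    · have hlt : x < q := by
        rcases Nat.lt_or_ge x q with h' | h'
        · exact h'
        · exfalso
          have : x = q := le_antisymm hx.2 h'
          rw [this] at h
          exact h (by simp)
      exact ZMod.val_cast_of_lt hlt
  unfold lamCount
  apply Finset.card_bij' (i := fun (p : ℕ × ℕ) _ => ((p.1 : ZMod q), (p.2 : ZMod q)))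
    (j := fun (b : ZMod q × ZMod q) _ => (g b.1, g b.2))
  · intro p hp
    simp only [Finset.mem_filter, Finset.mem_product] at hp
    simp only [Finset.mem_filter, Finset.mem_univ, true_and]
    exact (hcond p.1 p.2).mp hp.2
  · intro b hb
    simp only [Finset.mem_filter, Finset.mem_univ, true_and] at hb
    simp only [Finset.mem_filter, Finset.mem_product]
    refine ⟨⟨hgmem b.1, hgmem b.2⟩, ?_⟩
    rw [hcond (g b.1) (g b.2), hgcast b.1, hgcast b.2]
    exact hb
  · intro p hp
    simp only [Finset.mem_filter, Finset.mem_product] at hp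
    exact Prod.ext (hgicc p.1 hp.1.1) (hgicc p.2 hp.1.2)
  · intro b _
    exact Prod.ext (hgcast b.1) (hgcast b.2)

theorem stmt_8 : ∀ ε : ℝ, 0 < ε → ∃ C : ℝ, 0 < C ∧
    ∀ q : ℕ, 0 < q → ¬ (8 ∣ q) → (lamCount q : ℝ) ≤ C * (q : ℝ) ^ (1 + ε) := by
  intro ε hε
  obtain ⟨C₁, hC₁, hC⟩ := tau_bound ε hε
  refine ⟨4 * C₁, by positivity, ?_⟩
  intro q hq _
  haveI : NeZero q := ⟨hq.ne'⟩
  have hchain : lamCount q ≤ 4 * (q * q.divisors.card) := by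
    calc lamCount q
        = (univ.filter fun p : ZMod q × ZMod q => p.1^2 + p.2^2 + 1 = 0).card :=
          lamCount_eq q
      _ ≤ (univ.filter fun p : ZMod q × ZMod q => p.1^2 = p.2^2).card := S_card_le q
      _ ≤ 4 * (univ.filter fun p : ZMod q × ZMod q => p.1 * p.2 = 0).card := D_card_le q
      _ ≤ 4 * (q * q.divisors.card) := Nat.mul_le_mul_left 4 (U_card_le q)
  have hq0 : (0:ℝ) < q := by exact_mod_cast hq
  have h1 : (lamCount q : ℝ) ≤ 4 * ((q:ℝ) * (q.divisors.card : ℝ)) := by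
    exact_mod_cast hchain
  have h2 : (q.divisors.card : ℝ) ≤ C₁ * (q:ℝ) ^ ε := hC q hq
  calc (lamCount q : ℝ) ≤ 4 * ((q:ℝ) * (q.divisors.card : ℝ)) := h1
    _ ≤ 4 * ((q:ℝ) * (C₁ * (q:ℝ) ^ ε)) := by gcongr
    _ = 4 * C₁ * (q:ℝ) ^ (1 + ε) := by
        rw [Real.rpow_add hq0, Real.rpow_one]; ring
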